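/- Assume Gabow's conjecture: for any two bases B1 = {b_1,...,b_r}, B2 = {b'_1,...,b'_r} of a matroid, there exist permutations σ, σ' such that in the sequence (b_{σ(1)},...,b_{σ(r)}, b'_{σ'(1)},...,b'_{σ'(r)}) every r cyclically consecutive elements form a basis. Then for a matroid-constrained fair division instance with identical additive nonnegative valuations v where E partitions into n bases, any feasible allocation A maximizing the sorted vector (v(A_{σ(1)}),...,v(A_{σ(n)})) (sorted increasingly) lexicographically is EF1. -/

import Mathlib

variable {α : Type*}

noncomputable def setVal (v : α → ℝ) (A : Set α) : ℝ := ∑ᶠ g ∈ A, v g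

def IsBasePartition (M : Matroid α) (n : ℕ) (A : Fin n → Set α) : Prop :=
  (∀ i, M.IsBase (A i)) ∧ Pairwise (Function.onFun Disjoint A) ∧ (⋃ i, A i) = M.E

noncomputable def mmsOn (M : Matroid α) (E' : Set α) (m : ℕ) (v : α → ℝ) : ℝ :=
  sSup {x | ∃ A : Fin m → Set α, (∀ i, M.IsBase (A i)) ∧
    Pairwise (Function.onFun Disjoint A) ∧ (⋃ i, A i) = E' ∧ x = ⨅ j, setVal v (A j)}

noncomputable def mms (M : Matroid α) (n : ℕ) (v : α → ℝ) : ℝ := mmsOn M M.E n v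

def EF1 {n : ℕ} (v : Fin n → α → ℝ) (A : Fin n → Set α) : Prop :=
  ∀ i j, (A j).Nonempty → ∃ g ∈ A j, setVal (v i) (A i) ≥ setVal (v i) (A j \ {g})

/-- Gabow's conjecture (for matroids on `α`): for any two bases `B1, B2` there are
orderings `l1` of `B1` and `l2` of `B2` such that in the concatenated sequence every
`r` cyclically consecutive elements form a basis. -/
def GabowConjecture (α : Type*) : Prop :=
  ∀ (M' : Matroid α) (B1 B2 : Set α), M'.IsBase B1 → M'.IsBase B2 →
    ∃ l1 l2 : List α, l1.Nodup ∧ l2.Nodup ∧ {x | x ∈ l1} = B1 ∧ {x | x ∈ l2} = B2 ∧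
      l1.length = l2.length ∧
      ∀ i : ℕ, M'.IsBase
        {x | ∃ j < l1.length, (l1 ++ l2)[(i + j) % (l1 ++ l2).length]? = some x}

/-- The list of bundle values of an allocation, sorted in nondecreasing order. -/
noncomputable def sortedVals {n : ℕ} (v : α → ℝ) (A : Fin n → Set α) : List ℝ :=
  (List.ofFn fun j => setVal v (A j)).mergeSort (· ≤ ·)

/-! ### Auxiliary lemmas -/

lemma setVal_list (v : α → ℝ) (l : List α) (h : l.Nodup) :
    setVal v {x | x ∈ l} = (l.map v).sum := by
  classical
  have hs : {x | x ∈ l} = (l.toFinset : Set α) := by ext x; simp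
  rw [setVal, hs, finsum_mem_coe_finset, List.sum_toFinset _ h]

lemma setVal_remove (v : α → ℝ) {S : Set α} (hS : S.Finite) {g : α} (hg : g ∈ S) :
    setVal v S = setVal v (S \ {g}) + v g := by
  have hu : (S \ {g}) ∪ {g} = S := by
    rw [Set.diff_union_self, Set.union_eq_self_of_subset_right (by simpa using hg)]
  calc setVal v S = ∑ᶠ x ∈ (S \ {g}) ∪ {g}, v x := by rw [hu]; rfl
    _ = (∑ᶠ x ∈ S \ {g}, v x) + ∑ᶠ x ∈ ({g} : Set α), v x :=
        finsum_mem_union Set.disjoint_sdiff_left (hS.subset Set.diff_subset)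
          (Set.finite_singleton g)
    _ = setVal v (S \ {g}) + v g := by rw [finsum_mem_singleton]; rfl

lemma lex_of_count : ∀ (L L' : List ℝ), L.Pairwise (· ≤ ·) → L'.Pairwise (· ≤ ·) →
    L.length = L'.length → ∀ a : ℝ, L'.count a < L.count a →
    (∀ z : ℝ, z < a → L.count z = L'.count z) → List.Lex (· < ·) L L'
  | [], L', _, _, _, a, hc, _ => by simp at hc
  | x :: t, [], _, _, hlen, _, _, _ => by simp at hlen
  | x :: t, y :: t', hL, hL', hlen, a, hc, hz => by
    have hxt := (List.pairwise_cons.mp hL).1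
    have hyt := (List.pairwise_cons.mp hL').1
    have hxa : x ≤ a := by
      by_contra h
      push_neg at h
      have h0 : List.count a (x :: t) = 0 := by
        rw [List.count_eq_zero]
        intro hmem
        rcases List.mem_cons.mp hmem with h1 | h1
        · exact absurd h (by rw [h1]; exact lt_irrefl x)
        · exact absurd (hxt a h1) (not_le.mpr h)
      omega
    by_cases hxy : x = y
    · subst hxy
      apply List.Lex.cons
      refine lex_of_count t t' (List.pairwise_cons.mp hL).2 (List.pairwise_cons.mp hL').2
        (by simpa using hlen) a ?_ ?_
      · have h1 := List.count_cons (a := a) (b := x) (l := t)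
        have h2 := List.count_cons (a := a) (b := x) (l := t')
        omega
      · intro z hzlt
        have := hz z hzlt
        have h1 := List.count_cons (a := z) (b := x) (l := t)
        have h2 := List.count_cons (a := z) (b := x) (l := t')
        omega
    · have hxy' : x < y := by
        rcases lt_or_ge x y with h | h
        · exact h
        · exfalso
          have hyx : y < x := lt_of_le_of_ne h (Ne.symm hxy)
          have hya : y < a := lt_of_lt_of_le hyx hxa
          have hcy := hz y hya
          have hmem : y ∈ y :: t' := List.mem_cons_self
          have hpos : 0 < List.count y (y :: t') := List.count_pos_iff.mpr hmem
          have hpos' : 0 < List.count y (x :: t) := by omega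
          have hmem' : y ∈ x :: t := List.count_pos_iff.mp hpos'
          rcases List.mem_cons.mp hmem' with h1 | h1
          · exact absurd h1 (ne_of_lt hyx)
          · exact absurd (hxt y h1) (not_le.mpr hyx)
      exact List.Lex.rel hxy'

lemma count_ofFn_pair {n : ℕ} (f : Fin n → ℝ) (i j : Fin n) (hij : i ≠ j) (z : ℝ) :
    (List.ofFn f).count z = ((((List.finRange n).erase i).erase j).map f).count z
      + (if f i = z then 1 else 0) + (if f j = z then 1 else 0) := by
  have hi : i ∈ List.finRange n := List.mem_finRange i
  have hj : j ∈ (List.finRange n).erase i := by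
    rw [List.Nodup.mem_erase_iff (List.nodup_finRange n)]
    exact ⟨hij.symm, List.mem_finRange j⟩
  have hperm : (List.finRange n).Perm (i :: j :: ((List.finRange n).erase i).erase j) :=
    (List.perm_cons_erase hi).trans (List.Perm.cons i (List.perm_cons_erase hj))
  rw [List.ofFn_eq_map, (hperm.map f).count_eq z]
  simp only [List.map_cons, List.count_cons, beq_iff_eq]
  split_ifs <;> omega

lemma sortedVals_sorted {n : ℕ} (v : α → ℝ) (A : Fin n → Set α) :
    (sortedVals v A).Pairwise (· ≤ ·) := by
  have h := List.pairwise_mergeSort (le := fun a b : ℝ => decide (a ≤ b))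
    (by intro a b c hab hbc; simp only [decide_eq_true_eq] at *; exact le_trans hab hbc)
    (by intro a b; simp only [Bool.or_eq_true, decide_eq_true_eq]; exact le_total a b)
    (List.ofFn fun j => setVal v (A j))
  exact h.imp (fun hab => of_decide_eq_true hab)

lemma sortedVals_count {n : ℕ} (v : α → ℝ) (A : Fin n → Set α) (z : ℝ) :
    (sortedVals v A).count z = (List.ofFn fun t => setVal v (A t)).count z :=
  (List.mergeSort_perm _ _).count_eq z

lemma window1 (l1 l2 : List α) (hlen : l1.length = l2.length) (k : ℕ) (hk : k ≤ l1.length) :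
    {x | ∃ j < l1.length, (l1 ++ l2)[(k + j) % (l1 ++ l2).length]? = some x}
      = {x | x ∈ l1.drop k ++ l2.take k} := by
  have hL : (l1 ++ l2).length = l1.length + l2.length := List.length_append
  ext x
  simp only [Set.mem_setOf_eq, List.mem_append]
  constructor
  · rintro ⟨j, hj, hx⟩
    have hmod : (k + j) % (l1 ++ l2).length = k + j :=
      Nat.mod_eq_of_lt (by rw [hL]; omega)
    rw [hmod, List.getElem?_eq_some_iff] at hx
    obtain ⟨h1, h2⟩ := hx
    by_cases hc : k + j < l1.length
    · left
      rw [List.getElem_append_left hc] at h2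
      rw [List.mem_iff_getElem]
      refine ⟨j, by rw [List.length_drop]; omega, ?_⟩
      rw [List.getElem_drop]; exact h2
    · right
      push_neg at hc
      rw [List.getElem_append_right hc] at h2
      rw [List.mem_iff_getElem]
      refine ⟨k + j - l1.length, by rw [List.length_take]; omega, ?_⟩
      rw [List.getElem_take]; exact h2
  · rintro (hx | hx)
    · rw [List.mem_iff_getElem] at hx
      obtain ⟨m, hm, he⟩ := hx
      rw [List.length_drop] at hm
      refine ⟨m, by omega, ?_⟩
      have hmod : (k + m) % (l1 ++ l2).length = k + m :=
        Nat.mod_eq_of_lt (by rw [hL]; omega)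
      rw [hmod, List.getElem?_eq_some_iff]
      refine ⟨by rw [hL]; omega, ?_⟩
      rw [List.getElem_append_left (by omega : k + m < l1.length)]
      rw [List.getElem_drop] at he
      exact he
    · rw [List.mem_iff_getElem] at hx
      obtain ⟨m, hm, he⟩ := hx
      rw [List.length_take] at hm
      have hm' : m < k := lt_of_lt_of_le hm (min_le_left _ _)
      refine ⟨l1.length + m - k, by omega, ?_⟩
      have hidx : k + (l1.length + m - k) = l1.length + m := by omega
      rw [hidx]
      have hmod : (l1.length + m) % (l1 ++ l2).length = l1.length + m :=
        Nat.mod_eq_of_lt (by rw [hL]; omega)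
      rw [hmod, List.getElem?_eq_some_iff]
      refine ⟨by rw [hL]; omega, ?_⟩
      rw [List.getElem_append_right (by omega : l1.length ≤ l1.length + m)]
      rw [List.getElem_take] at he
      simpa using he

lemma window2 (l1 l2 : List α) (hlen : l1.length = l2.length) (k : ℕ) (hk : k ≤ l1.length) :
    {x | ∃ j < l1.length, (l1 ++ l2)[(k + l1.length + j) % (l1 ++ l2).length]? = some x}
      = {x | x ∈ l1.take k ++ l2.drop k} := by
  have hL : (l1 ++ l2).length = l1.length + l2.length := List.length_append
  set r := l1.length with hr
  ext x
  simp only [Set.mem_setOf_eq, List.mem_append]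
  constructor
  · rintro ⟨j, hj, hx⟩
    by_cases hc : k + j < r
    · have hmod : (k + r + j) % (l1 ++ l2).length = k + r + j :=
        Nat.mod_eq_of_lt (by rw [hL]; omega)
      rw [hmod, List.getElem?_eq_some_iff] at hx
      obtain ⟨h1, h2⟩ := hx
      rw [List.getElem_append_right (by omega : l1.length ≤ k + r + j)] at h2
      right
      rw [List.mem_iff_getElem]
      refine ⟨k + r + j - r - k, by rw [List.length_drop]; omega, ?_⟩
      rw [List.getElem_drop]
      have : k + (k + r + j - r - k) = k + r + j - l1.length := by omega
      exact (getElem_congr_idx this).trans h2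
    · push_neg at hc
      have h2r : (l1 ++ l2).length = r + r := by rw [hL, hlen]
      have hge : k + r + j ≥ (l1 ++ l2).length := by omega
      have hmod : (k + r + j) % (l1 ++ l2).length = k + j - r := by
        rw [Nat.mod_eq_sub_mod hge, h2r]
        have : k + r + j - (r + r) = k + j - r := by omega
        rw [this]
        exact Nat.mod_eq_of_lt (by omega)
      rw [hmod, List.getElem?_eq_some_iff] at hx
      obtain ⟨h1, h2⟩ := hx
      rw [List.getElem_append_left (by omega : k + j - r < l1.length)] at h2
      left
      rw [List.mem_iff_getElem]
      refine ⟨k + j - r, by rw [List.length_take]; omega, ?_⟩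
      rw [List.getElem_take]
      exact h2
  · rintro (hx | hx)
    · rw [List.mem_iff_getElem] at hx
      obtain ⟨m, hm, he⟩ := hx
      rw [List.length_take] at hm
      have hm' : m < k := lt_of_lt_of_le hm (min_le_left _ _)
      refine ⟨r - k + m, by omega, ?_⟩
      have h2r : (l1 ++ l2).length = r + r := by rw [hL, hlen]
      have hidx : k + r + (r - k + m) = (r + r) + m := by omega
      rw [hidx]
      have hmod : ((r + r) + m) % (l1 ++ l2).length = m := by
        rw [h2r, Nat.add_mod_left]
        exact Nat.mod_eq_of_lt (by omega)
      rw [hmod, List.getElem?_eq_some_iff]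
      refine ⟨by rw [h2r]; omega, ?_⟩
      rw [List.getElem_append_left (by omega : m < l1.length)]
      rw [List.getElem_take] at he
      exact he
    · rw [List.mem_iff_getElem] at hx
      obtain ⟨m, hm, he⟩ := hx
      rw [List.length_drop] at hm
      refine ⟨m, by omega, ?_⟩
      have hmod : (k + r + m) % (l1 ++ l2).length = k + r + m :=
        Nat.mod_eq_of_lt (by rw [hL]; omega)
      rw [hmod, List.getElem?_eq_some_iff]
      refine ⟨by rw [hL]; omega, ?_⟩
      rw [List.getElem_append_right (by omega : l1.length ≤ k + r + m)]
      rw [List.getElem_drop] at he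
      have : k + r + m - l1.length = k + m := by omega
      exact (getElem_congr_idx this).trans he

/-! ### Main theorem -/

/-- Assuming Gabow's conjecture, for identical additive nonnegative valuations, any
feasible allocation maximizing the sorted vector of bundle values lexicographically
is EF1. -/
theorem gabow_implies_lexmax_EF1 (hGabow : GabowConjecture α)
    (M : Matroid α) [M.Finite] (n : ℕ) (v : α → ℝ) (hv : ∀ g ∈ M.E, 0 ≤ v g)
    (A : Fin n → Set α) (hA : IsBasePartition M n A)
    (hlexmax : ∀ A' : Fin n → Set α, IsBasePartition M n A' →
      ¬ List.Lex (· < ·) (sortedVals v A) (sortedVals v A')) :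
    EF1 (fun _ : Fin n => v) A := by
  classical
  intro i j hAj
  show ∃ g ∈ A j, setVal v (A i) ≥ setVal v (A j \ {g})
  obtain ⟨hbase, hdisj, hunion⟩ := hA
  have hE : M.E.Finite := M.ground_finite
  have hfin : ∀ t, (A t).Finite := fun t => hE.subset (hbase t).subset_ground
  have hvA : ∀ t, ∀ g ∈ A t, 0 ≤ v g := fun t g hg => hv g ((hbase t).subset_ground hg)
  by_cases hij : i = j
  · obtain ⟨g, hg⟩ := hAj
    subst hij
    refine ⟨g, hg, ?_⟩
    have := setVal_remove v (hfin i) hg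
    have h0 := hvA i g hg
    linarith
  · by_contra hno
    push_neg at hno
    obtain ⟨l1, l2, hn1, hn2, hs1, hs2, hlen, hwin⟩ := hGabow M (A i) (A j) (hbase i) (hbase j)
    have hdisj_ij : Disjoint (A i) (A j) := hdisj hij
    have hmem1 : ∀ x, x ∈ l1 ↔ x ∈ A i := fun x => by rw [← hs1]; rfl
    have hmem2 : ∀ x, x ∈ l2 ↔ x ∈ A j := fun x => by rw [← hs2]; rfl
    have hb : ∀ g ∈ A j, setVal v (A i) + v g < setVal v (A j) := by
      intro g hg
      have h1 := hno g hg
      have h2 := setVal_remove v (hfin j) hg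
      linarith
    have hab : setVal v (A i) < setVal v (A j) := by
      obtain ⟨g, hg⟩ := hAj
      have := hb g hg
      have := hvA j g hg
      linarith
    have hva : setVal v (A i) = (l1.map v).sum := by
      rw [← hs1, setVal_list v l1 hn1]
    have hvb : setVal v (A j) = (l2.map v).sum := by
      rw [← hs2, setVal_list v l2 hn2]
    set F : ℕ → ℝ := fun k => ((l1.drop k).map v).sum + ((l2.take k).map v).sum with hF_def
    have hF0 : F 0 = setVal v (A i) := by simp [hF_def, hva]
    have hFr : F l1.length = setVal v (A j) := by
      have h1 : l1.drop l1.length = [] := List.drop_length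
      have h2 : l2.take l1.length = l2 := by rw [hlen]; exact List.take_length
      simp only [hF_def]
      rw [h1, h2, hvb]
      simp
    have hstep : ∀ m (hm : m < l1.length),
        F (m + 1) = F m - v (l1[m]'hm) + v (l2[m]'(hlen ▸ hm)) := by
      intro m hm
      have hm2 : m < l2.length := hlen ▸ hm
      simp only [hF_def]
      rw [List.drop_eq_getElem_cons hm, List.take_succ, List.getElem?_eq_getElem hm2]
      simp only [List.map_cons, List.sum_cons, List.map_append, List.sum_append,
        Option.toList_some, List.map_cons, List.map_nil, List.sum_nil]
      ring
    have hex : ∃ k, k ≤ l1.length ∧ setVal v (A i) < F k :=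
      ⟨l1.length, le_refl _, by rw [hFr]; exact hab⟩
    set k := Nat.find hex with hk_def
    have hk1 : k ≤ l1.length := by rw [hk_def]; exact (Nat.find_spec hex).1
    have hk2 : setVal v (A i) < F k := by rw [hk_def]; exact (Nat.find_spec hex).2
    have hk0 : k ≠ 0 := by
      intro h
      rw [h, hF0] at hk2
      exact lt_irrefl _ hk2
    have hmlt : k - 1 < k := by omega
    have hFm : F (k - 1) ≤ setVal v (A i) := by
      by_contra h
      push_neg at h
      exact Nat.find_min hex (hk_def ▸ hmlt) ⟨by omega, h⟩
    have hmr : k - 1 < l1.length := by omega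
    have hmr2 : k - 1 < l2.length := hlen ▸ hmr
    have hstepk := hstep (k - 1) hmr
    have hkm : (k - 1) + 1 = k := by omega
    rw [hkm] at hstepk
    have hl1m_mem : l1[k-1] ∈ A i := (hmem1 _).mp (List.getElem_mem hmr)
    have hl2m_mem : l2[k-1] ∈ A j := (hmem2 _).mp (List.getElem_mem hmr2)
    have ha_lt : setVal v (A i) < F k := hk2
    have hx_lt : F k < setVal v (A j) := by
      have h1 := hb _ hl2m_mem
      have h2 := hvA i _ hl1m_mem
      linarith
    -- the swapped bundles
    set W1 : Set α := {x | x ∈ l1.drop k ++ l2.take k} with hW1_def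
    set W2 : Set α := {x | x ∈ l1.take k ++ l2.drop k} with hW2_def
    have hW1base : M.IsBase W1 := by
      have := hwin k
      rwa [window1 l1 l2 hlen k hk1] at this
    have hW2base : M.IsBase W2 := by
      have := hwin (k + l1.length)
      rwa [window2 l1 l2 hlen k hk1] at this
    have hW1mem : ∀ x, x ∈ W1 ↔ x ∈ l1.drop k ∨ x ∈ l2.take k := by
      intro x; rw [hW1_def]; simp [List.mem_append]
    have hW2mem : ∀ x, x ∈ W2 ↔ x ∈ l1.take k ∨ x ∈ l2.drop k := by
      intro x; rw [hW2_def]; simp [List.mem_append]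
    have hW1sub : W1 ⊆ A i ∪ A j := by
      intro x hx
      rcases (hW1mem x).mp hx with h | h
      · exact Or.inl ((hmem1 x).mp ((List.drop_sublist k l1).subset h))
      · exact Or.inr ((hmem2 x).mp ((List.take_sublist k l2).subset h))
    have hW2sub : W2 ⊆ A i ∪ A j := by
      intro x hx
      rcases (hW2mem x).mp hx with h | h
      · exact Or.inl ((hmem1 x).mp ((List.take_sublist k l1).subset h))
      · exact Or.inr ((hmem2 x).mp ((List.drop_sublist k l2).subset h))
    have hW12 : Disjoint W1 W2 := by
      rw [Set.disjoint_left]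
      intro x hx1 hx2
      rcases (hW1mem x).mp hx1 with h1 | h1 <;> rcases (hW2mem x).mp hx2 with h2 | h2
      · exact List.disjoint_take_drop hn1 (le_refl k) h2 h1
      · exact Set.disjoint_left.mp hdisj_ij ((hmem1 x).mp ((List.drop_sublist k l1).subset h1))
          ((hmem2 x).mp ((List.drop_sublist k l2).subset h2))
      · exact Set.disjoint_left.mp hdisj_ij ((hmem1 x).mp ((List.take_sublist k l1).subset h2))
          ((hmem2 x).mp ((List.take_sublist k l2).subset h1))
      · exact List.disjoint_take_drop hn2 (le_refl k) h1 h2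
    have hkey : ∀ t : Fin n, t ≠ i → t ≠ j → Disjoint (A t) (A i ∪ A j) := by
      intro t hti htj
      exact Set.disjoint_union_right.mpr ⟨hdisj hti, hdisj htj⟩
    set A' : Fin n → Set α := fun t => if t = i then W1 else if t = j then W2 else A t
      with hA'_def
    have hA'i : A' i = W1 := by simp [hA'_def]
    have hji : j ≠ i := fun h => hij h.symm
    have hA'j : A' j = W2 := by simp [hA'_def, hji]
    have hA'rest : ∀ t, t ≠ i → t ≠ j → A' t = A t := by
      intro t hti htj; simp [hA'_def, hti, htj]
    have hA'base : ∀ t, M.IsBase (A' t) := by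
      intro t
      by_cases hti : t = i
      · rw [hti, hA'i]; exact hW1base
      · by_cases htj : t = j
        · rw [htj, hA'j]; exact hW2base
        · rw [hA'rest t hti htj]; exact hbase t
    have hA'disj : Pairwise (Function.onFun Disjoint A') := by
      intro s t hst
      show Disjoint (A' s) (A' t)
      by_cases hsi : s = i
      · subst hsi
        rw [hA'i]
        by_cases htj : t = j
        · rw [htj, hA'j]; exact hW12
        · rw [hA'rest t (Ne.symm hst) htj]
          exact Set.disjoint_of_subset_left hW1sub (hkey t (Ne.symm hst) htj).symm
      · by_cases hsj : s = j
        · subst hsj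
          rw [hA'j]
          by_cases hti : t = i
          · rw [hti, hA'i]; exact hW12.symm
          · rw [hA'rest t hti (Ne.symm hst)]
            exact Set.disjoint_of_subset_left hW2sub (hkey t hti (Ne.symm hst)).symm
        · rw [hA'rest s hsi hsj]
          by_cases hti : t = i
          · rw [hti, hA'i]
            exact Set.disjoint_of_subset_right hW1sub (hkey s hsi hsj)
          · by_cases htj : t = j
            · rw [htj, hA'j]
              exact Set.disjoint_of_subset_right hW2sub (hkey s hsi hsj)
            · rw [hA'rest t hti htj]; exact hdisj hst
    have hWcover : ∀ x, x ∈ A i ∪ A j → x ∈ W1 ∪ W2 := by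
      intro x hx
      rcases hx with hx | hx
      · have hxl : x ∈ l1 := (hmem1 x).mpr hx
        rw [← List.take_append_drop k l1, List.mem_append] at hxl
        rcases hxl with h | h
        · exact Or.inr ((hW2mem x).mpr (Or.inl h))
        · exact Or.inl ((hW1mem x).mpr (Or.inl h))
      · have hxl : x ∈ l2 := (hmem2 x).mpr hx
        rw [← List.take_append_drop k l2, List.mem_append] at hxl
        rcases hxl with h | h
        · exact Or.inl ((hW1mem x).mpr (Or.inr h))
        · exact Or.inr ((hW2mem x).mpr (Or.inr h))
    have hA'union : (⋃ t, A' t) = M.E := by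
      apply subset_antisymm
      · exact Set.iUnion_subset fun t => (hA'base t).subset_ground
      · intro x hx
        rw [← hunion] at hx
        obtain ⟨t, hxt⟩ := Set.mem_iUnion.mp hx
        by_cases hti : t = i
        · have hxi : x ∈ A i := hti ▸ hxt
          rcases hWcover x (Or.inl hxi) with h | h
          · exact Set.mem_iUnion.mpr ⟨i, by rw [hA'i]; exact h⟩
          · exact Set.mem_iUnion.mpr ⟨j, by rw [hA'j]; exact h⟩
        · by_cases htj : t = j
          · have hxj : x ∈ A j := htj ▸ hxt
            rcases hWcover x (Or.inr hxj) with h | h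
            · exact Set.mem_iUnion.mpr ⟨i, by rw [hA'i]; exact h⟩
            · exact Set.mem_iUnion.mpr ⟨j, by rw [hA'j]; exact h⟩
          · exact Set.mem_iUnion.mpr ⟨t, by rw [hA'rest t hti htj]; exact hxt⟩
    have hA'part : IsBasePartition M n A' := ⟨hA'base, hA'disj, hA'union⟩
    -- values of the new bundles
    have hldisj : l1.Disjoint l2 := by
      intro x hx1 hx2
      exact Set.disjoint_left.mp hdisj_ij ((hmem1 x).mp hx1) ((hmem2 x).mp hx2)
    have hnodW1 : (l1.drop k ++ l2.take k).Nodup :=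
      List.Nodup.append ((List.drop_sublist k l1).nodup hn1)
        ((List.take_sublist k l2).nodup hn2)
        (fun _ hx1 hx2 => hldisj ((List.drop_sublist k l1).subset hx1)
          ((List.take_sublist k l2).subset hx2))
    have hnodW2 : (l1.take k ++ l2.drop k).Nodup :=
      List.Nodup.append ((List.take_sublist k l1).nodup hn1)
        ((List.drop_sublist k l2).nodup hn2)
        (fun _ hx1 hx2 => hldisj ((List.take_sublist k l1).subset hx1)
          ((List.drop_sublist k l2).subset hx2))
    have hvW1 : setVal v W1 = F k := by
      rw [hW1_def, setVal_list v _ hnodW1, List.map_append, List.sum_append]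
    have hvW2 : setVal v W2 = setVal v (A i) + setVal v (A j) - F k := by
      rw [hW2_def, setVal_list v _ hnodW2, List.map_append, List.sum_append]
      have e1 : ((l1.take k).map v).sum + ((l1.drop k).map v).sum = (l1.map v).sum := by
        rw [← List.sum_append, ← List.map_append, List.take_append_drop]
      have e2 : ((l2.take k).map v).sum + ((l2.drop k).map v).sum = (l2.map v).sum := by
        rw [← List.sum_append, ← List.map_append, List.take_append_drop]
      have e3 : F k = ((l1.drop k).map v).sum + ((l2.take k).map v).sum := rfl
      rw [hva, hvb]
      linarith
    have hf'i : setVal v (A' i) = F k := by rw [hA'i, hvW1]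
    have hf'j : setVal v (A' j) = setVal v (A i) + setVal v (A j) - F k := by
      rw [hA'j, hvW2]
    -- count comparison
    set rest : List (Fin n) := ((List.finRange n).erase i).erase j with hrest_def
    have hmapeq : rest.map (fun t => setVal v (A t)) = rest.map (fun t => setVal v (A' t)) := by
      apply List.map_congr_left
      intro t ht
      have h1 := (List.Nodup.mem_erase_iff ((List.nodup_finRange n).erase i)).mp ht
      have h2 := (List.Nodup.mem_erase_iff (List.nodup_finRange n)).mp h1.2
      rw [hA'rest t h2.1 h1.1]
    have hcA : ∀ z, (sortedVals v A).count z
        = ((rest.map fun t => setVal v (A t)).count z)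
          + (if setVal v (A i) = z then 1 else 0) + (if setVal v (A j) = z then 1 else 0) := by
      intro z
      rw [sortedVals_count, count_ofFn_pair (fun t => setVal v (A t)) i j hij z]
    have hcA' : ∀ z, (sortedVals v A').count z
        = ((rest.map fun t => setVal v (A t)).count z)
          + (if setVal v (A' i) = z then 1 else 0) + (if setVal v (A' j) = z then 1 else 0) := by
      intro z
      rw [sortedVals_count, count_ofFn_pair (fun t => setVal v (A' t)) i j hij z, hmapeq]
    have hy_gt : setVal v (A i) < setVal v (A' j) := by rw [hf'j]; linarith
    have hy_lt : setVal v (A' j) < setVal v (A j) := by rw [hf'j]; linarith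
    have hlex : List.Lex (· < ·) (sortedVals v A) (sortedVals v A') := by
      apply lex_of_count _ _ (sortedVals_sorted v A) (sortedVals_sorted v A')
        (by simp [sortedVals, List.length_mergeSort]) (setVal v (A i))
      · rw [hcA, hcA']
        have hne1 : ¬ (setVal v (A' i) = setVal v (A i)) := by
          rw [hf'i]; exact ne_of_gt ha_lt
        have hne2 : ¬ (setVal v (A' j) = setVal v (A i)) := ne_of_gt hy_gt
        rw [if_neg hne1, if_neg hne2, if_pos rfl]
        split_ifs <;> omega
      · intro z hzlt
        rw [hcA, hcA']
        have h1 : ¬ (setVal v (A i) = z) := ne_of_gt hzlt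
        have h2 : ¬ (setVal v (A j) = z) := ne_of_gt (lt_trans hzlt hab)
        have h3 : ¬ (setVal v (A' i) = z) := by
          rw [hf'i]; exact ne_of_gt (lt_trans hzlt ha_lt)
        have h4 : ¬ (setVal v (A' j) = z) := ne_of_gt (lt_trans hzlt hy_gt)
        rw [if_neg h1, if_neg h2, if_neg h3, if_neg h4]
    exact hlexmax A' hA'part hlex
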